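/- Let b be a real number, k an integer with k ≠ b, n a positive integer, and set β = |k − b| > 0. Define u : (0,∞) → ℝ by u(x) = x²·e^{−βx²/2}·∑_{j=0}^{n−1} (−1)^j · binom(n, n−1−j) · (βx²)^j / j!. Then for every x > 0 one has u''(x) − u'(x)/x − (k−b)²x²·u(x) = −4n|k−b|·u(x), and moreover ∫₀^∞ u(x)²·x^{−1} dx < ∞. -/

import Mathlib

open Real MeasureTheory

noncomputable def lagP (n : ℕ) : Polynomial ℝ :=
  ∑ j ∈ Finset.range n,
    Polynomial.C ((-1:ℝ)^j * (n.choose (n - 1 - j)) / j.factorial) * Polynomial.X ^ j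

lemma lagP_coeff (n j : ℕ) : (lagP n).coeff j =
    if j < n then (-1:ℝ)^j * (n.choose (n - 1 - j)) / j.factorial else 0 := by
  simp [lagP, Polynomial.finset_sum_coeff, Polynomial.coeff_C_mul, Polynomial.coeff_X_pow,
    Finset.sum_ite_eq, Finset.mem_range]

lemma lagP_key (n i : ℕ) :
    (lagP n).coeff (i+2) * ((i:ℝ)+2) * ((i:ℝ)+1) + 2 * ((lagP n).coeff (i+2) * ((i:ℝ)+2))
      - (lagP n).coeff (i+1) * ((i:ℝ)+1) + ((n:ℝ) - 1) * (lagP n).coeff (i+1) = 0 := by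
  rw [lagP_coeff, lagP_coeff]
  by_cases h1 : i + 1 < n
  · by_cases h2 : i + 2 < n
    · obtain ⟨m, rfl⟩ : ∃ m, n = i + 3 + m := ⟨n - (i+3), by omega⟩
      rw [if_pos h1, if_pos h2]
      have e1 : i + 3 + m - 1 - (i + 2) = m := by omega
      have e2 : i + 3 + m - 1 - (i + 1) = m + 1 := by omega
      rw [e1, e2]
      have hc : ((i+3+m).choose (m+1) : ℝ) * (m+1) = ((i+3+m).choose m : ℝ) * ((i:ℝ)+3) := by
        have := Nat.choose_succ_right_eq (i+3+m) m
        have h3 : i + 3 + m - m = i + 3 := by omega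
        rw [h3] at this
        exact_mod_cast congrArg (Nat.cast : ℕ → ℝ) this
      have hf1 : ((i+2).factorial : ℝ) = (i+1).factorial * ((i:ℝ)+2) := by
        rw [Nat.factorial_succ]; push_cast; ring
      have hne1 : ((i+1).factorial : ℝ) ≠ 0 := by positivity
      have h2' : ((i:ℝ)+2) ≠ 0 := by positivity
      rw [pow_succ]
      push_cast
      field_simp [hf1]
      linear_combination ((-1:ℝ)^(i+1) * ((i+1).factorial:ℝ) * ((i:ℝ)+2)) * hc
        + ((-1:ℝ)^(i+1) * ((i+3+m).choose (m+1) : ℝ) * ((m:ℝ)+1)) * hf1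
    · have hn2 : n = i + 2 := by omega
      subst hn2
      rw [if_pos h1, if_neg h2]
      have e : i + 2 - 1 - (i+1) = 0 := by omega
      rw [e, Nat.choose_zero_right]
      push_cast
      ring
  · have h2 : ¬ (i + 2 < n) := by omega
    rw [if_neg h1, if_neg h2]
    ring

lemma lagP_ode (n : ℕ) (hn : 0 < n) :
    Polynomial.X * ((lagP n).derivative.derivative)
      + (Polynomial.C 2 - Polynomial.X) * (lagP n).derivative
      + Polynomial.C ((n:ℝ) - 1) * lagP n = 0 := by
  ext j
  rcases j with _ | i
  · simp only [sub_mul, Polynomial.coeff_add, Polynomial.coeff_sub, Polynomial.mul_coeff_zero,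
      Polynomial.coeff_X_zero, zero_mul, Polynomial.coeff_C_mul, Polynomial.coeff_derivative,
      Polynomial.coeff_zero, Polynomial.coeff_C_zero]
    rw [lagP_coeff, lagP_coeff, if_pos hn]
    rcases Nat.lt_or_ge 1 n with h | h
    · rw [if_pos h]
      obtain ⟨m, rfl⟩ : ∃ m, n = m + 2 := ⟨n - 2, by omega⟩
      have e1 : m + 2 - 1 - 1 = m := by omega
      have e2 : m + 2 - 1 - 0 = m + 1 := by omega
      rw [e1, e2]
      have hc : ((m+2).choose m : ℝ) * 2 = ((m:ℝ)+2) * ((m:ℝ)+1) := by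
        have h4 := Nat.choose_succ_right_eq (m+2) m
        have h3 : m + 2 - m = 2 := by omega
        rw [h3, Nat.choose_succ_self_right] at h4
        have := congrArg (Nat.cast : ℕ → ℝ) h4.symm
        push_cast at this
        linarith
      rw [Nat.choose_succ_self_right]
      simp [Nat.factorial]
      linear_combination (-1 : ℝ) * hc
    · rw [if_neg (by omega)]
      have hn1 : n = 1 := by omega
      subst hn1
      norm_num
  · simp only [sub_mul, Polynomial.coeff_add, Polynomial.coeff_sub, Polynomial.coeff_X_mul,
      Polynomial.coeff_C_mul, Polynomial.coeff_derivative, Polynomial.coeff_zero]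
    have := lagP_key n i
    push_cast at this ⊢
    linear_combination this

lemma lagP_eval_eq (n : ℕ) (y : ℝ) :
    (lagP n).eval y
      = ∑ j ∈ Finset.range n, (-1:ℝ)^j * (n.choose (n - 1 - j)) * y^j / j.factorial := by
  rw [lagP, Polynomial.eval_finset_sum]
  refine Finset.sum_congr rfl fun j _ => ?_
  rw [Polynomial.eval_mul, Polynomial.eval_C, Polynomial.eval_pow, Polynomial.eval_X]
  ring

/-- Aharonov–Bohm Grushin cylinder: with `β = |k − b| > 0`, the function
`u(x) = x²·e^{−βx²/2}·L¹_{n−1}(βx²)` satisfies the eigenvalue equation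
`u'' − u'/x − (k−b)²x²u = −4n|k−b|·u` of the `k`-th Fourier fiber of the
magnetic Laplacian, and is square-integrable for the measure `x⁻¹dx`. -/
theorem grushin_cylinder_ab_eigenfunction (b : ℝ) (k : ℤ) (hk : (k : ℝ) ≠ b)
    (n : ℕ) (hn : 0 < n) (β : ℝ) (hβ : β = |(k : ℝ) - b|)
    (u : ℝ → ℝ)
    (hu : ∀ x : ℝ, u x = x ^ 2 * Real.exp (-(β * x ^ 2) / 2) *
      ∑ j ∈ Finset.range n,
        (-1 : ℝ) ^ j * (n.choose (n - 1 - j)) * (β * x ^ 2) ^ j / j.factorial) :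
    (∀ x : ℝ, 0 < x →
      deriv (deriv u) x - deriv u x / x - ((k : ℝ) - b) ^ 2 * x ^ 2 * u x
        = -(4 * n * |(k : ℝ) - b|) * u x) ∧
    IntegrableOn (fun x : ℝ => (u x) ^ 2 / x) (Set.Ioi 0) := by
  have hb0 : 0 < β := by
    rw [hβ]; exact abs_pos.mpr (sub_ne_zero.mpr hk)
  set P : Polynomial ℝ := lagP n with hPdef
  set Q : Polynomial ℝ := P.derivative with hQdef
  set R : Polynomial ℝ := Q.derivative with hRdef
  set E : ℝ → ℝ := fun x => Real.exp (-(β * x^2)/2) with hEdef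
  have hufun : u = fun x => x^2 * E x * P.eval (β * x^2) := by
    funext x
    rw [hu x, lagP_eval_eq]
  have hode : ∀ y : ℝ, y * R.eval y + (2 - y) * Q.eval y + ((n:ℝ)-1) * P.eval y = 0 := by
    intro y
    have := congrArg (Polynomial.eval y) (lagP_ode n hn)
    simpa using this
  have hinner : ∀ x : ℝ, HasDerivAt (fun x : ℝ => β * x^2) (β * (2*x)) x := fun x => by
    simpa using (hasDerivAt_pow 2 x).const_mul β
  have hEd : ∀ x, HasDerivAt E (-(β*x) * E x) x := by
    intro x
    have h1 : HasDerivAt (fun x : ℝ => -(β * x^2)/2) (-(β*x)) x := by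
      have := ((hasDerivAt_pow 2 x).const_mul β).neg.div_const 2
      refine this.congr_deriv ?_
      ring
    simpa [hEdef, mul_comm] using h1.exp
  have hPe : ∀ x, HasDerivAt (fun x : ℝ => P.eval (β * x^2)) (Q.eval (β * x^2) * (β * (2*x))) x :=
    fun x => (P.hasDerivAt (β * x^2)).comp (h₂ := fun y => P.eval y) x (hinner x)
  have hQe : ∀ x, HasDerivAt (fun x : ℝ => Q.eval (β * x^2)) (R.eval (β * x^2) * (β * (2*x))) x :=
    fun x => (Q.hasDerivAt (β * x^2)).comp (h₂ := fun y => Q.eval y) x (hinner x)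
  set v : ℝ → ℝ := fun x => E x * (2*x*P.eval (β*x^2)
      + β*x^3*(2*Q.eval (β*x^2) - P.eval (β*x^2))) with hvdef
  have hud : ∀ x, HasDerivAt u (v x) x := by
    intro x
    rw [hufun]
    have h := ((hasDerivAt_pow 2 x).mul (hEd x)).mul (hPe x)
    refine h.congr_deriv ?_
    simp only [hvdef, Pi.mul_apply]
    push_cast
    ring
  have hderivu : deriv u = v := funext fun x => (hud x).deriv
  set w : ℝ → ℝ := fun x => E x * ((2 - 5*β*x^2 + β^2*x^4) * P.eval (β*x^2)
      + (10*β*x^2 - 4*β^2*x^4) * Q.eval (β*x^2) + 4*β^2*x^4 * R.eval (β*x^2)) with hwdef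
  have hvd : ∀ x, HasDerivAt v (w x) x := by
    intro x
    have hg1 : HasDerivAt (fun x : ℝ => 2*x*P.eval (β*x^2))
        (2 * P.eval (β*x^2) + 2*x*(Q.eval (β*x^2) * (β * (2*x)))) x := by
      have hlin : HasDerivAt (fun x : ℝ => 2*x) 2 x := by
        simpa using (hasDerivAt_id x).const_mul 2
      have := hlin.mul (hPe x)
      exact this
    have hg2 : HasDerivAt (fun x : ℝ => β*x^3*(2*Q.eval (β*x^2) - P.eval (β*x^2)))
        (β*(3*x^2)*(2*Q.eval (β*x^2) - P.eval (β*x^2))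
          + β*x^3*(2*(R.eval (β*x^2) * (β * (2*x))) - Q.eval (β*x^2) * (β * (2*x)))) x := by
      have := ((hasDerivAt_pow 3 x).const_mul β).mul (((hQe x).const_mul 2).sub (hPe x))
      refine this.congr_deriv ?_
      norm_num
    have h := (hEd x).mul (hg1.add hg2)
    refine h.congr_deriv ?_
    simp only [hwdef, hvdef, Pi.add_apply]
    ring
  refine ⟨?_, ?_⟩
  · intro x hx
    have hx' : x ≠ 0 := ne_of_gt hx
    have hsq : ((k:ℝ) - b)^2 = β^2 := by rw [hβ, sq_abs]
    rw [hderivu, (hvd x).deriv, hsq, ← hβ, hufun]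
    have h0 := hode (β * x^2)
    simp only [hwdef, hvdef]
    field_simp
    linear_combination (4*β*x^2 * E x) * h0
  · set T : Polynomial ℝ :=
      Polynomial.X^3 * ((lagP n).comp (Polynomial.C β * Polynomial.X^2))^2 with hTdef
    have hTint : IntegrableOn (fun x : ℝ => T.eval x * Real.exp (-β * x^2)) (Set.Ioi 0) := by
      have heq : (fun x : ℝ => T.eval x * Real.exp (-β * x^2))
          = fun x : ℝ => ∑ i ∈ Finset.range (T.natDegree + 1),
              T.coeff i * (x^i * Real.exp (-β * x^2)) := by
        funext x
        rw [Polynomial.eval_eq_sum_range, Finset.sum_mul]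
        exact Finset.sum_congr rfl fun i _ => by ring
      rw [heq]
      apply MeasureTheory.integrable_finset_sum
      intro i _
      apply Integrable.const_mul
      have hs : (-1:ℝ) < (i:ℝ) := by
        have := Nat.cast_nonneg (α := ℝ) i
        linarith
      have h := integrableOn_rpow_mul_exp_neg_mul_sq hb0 hs
      refine h.congr_fun (fun x _ => ?_) measurableSet_Ioi
      beta_reduce
      rw [Real.rpow_natCast]
    refine hTint.congr_fun (fun x hx => ?_) measurableSet_Ioi
    have hx0 : (0:ℝ) < x := hx
    have hx' : x ≠ 0 := ne_of_gt hx0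
    have hEE : Real.exp (-β * x^2) = E x * E x := by
      rw [hEdef, ← Real.exp_add]
      congr 1
      ring
    rw [hufun]
    simp only [hTdef, Polynomial.eval_mul, Polynomial.eval_pow, Polynomial.eval_comp,
      Polynomial.eval_C, Polynomial.eval_X, hEE]
    field_simp
    ring
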